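/- arXiv:1602.05091 — 5 statements merged into one kernel-verified Lean document; each statement's English description precedes it below -/
import Mathlib

section
/- Let g be a 4-dimensional real Lie algebra with basis e1,e2,e3,e4 and nonzero brackets [e1,e2]=e3, [e4,e1]=e2, [e4,e2]=e1, graded by deg(e1)=deg(e2)=-1, deg(e3)=-2, deg(e4)=0. Then any linear map φ: g_{-1}⊕g_{-2} → g_0⊕g_{-1} raising degree by 1 (i.e. φ(g_{-1})⊆g_0, φ(g_{-2})⊆g_{-1}) and satisfying the derivation property φ([X,Y])=[φ(X),Y]+[X,φ(Y)] for all X,Y in g_{-1}⊕g_{-2} is identically zero. -/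
/-- The first Tanaka prolongation of the Heisenberg algebra `m = span{e1,e2,e3}`
(with `[e1,e2]=e3`) together with `g₀ = span{e4}` acting by `[e4,e1]=e2`, `[e4,e2]=e1`
vanishes: any degree-one linear map `φ` on `m` (sending `g₋₁` to `g₀` and `g₋₂` to `g₋₁`)
satisfying the derivation property is zero. Here `e 0, e 1, e 2, e 3` play the roles of
`e1, e2, e3, e4`. -/
theorem tanaka_prolongation_vanishes
    (L : Type*) [LieRing L] [LieAlgebra ℝ L] (e : Module.Basis (Fin 4) ℝ L)
    (h12 : ⁅e 0, e 1⁆ = e 2) (h13 : ⁅e 0, e 2⁆ = 0) (h23 : ⁅e 1, e 2⁆ = 0)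
    (h41 : ⁅e 3, e 0⁆ = e 1) (h42 : ⁅e 3, e 1⁆ = e 0) (h43 : ⁅e 3, e 2⁆ = 0)
    (φ : L →ₗ[ℝ] L)
    (hφ1 : φ (e 0) ∈ Submodule.span ℝ ({e 3} : Set L))
    (hφ2 : φ (e 1) ∈ Submodule.span ℝ ({e 3} : Set L))
    (hφ3 : φ (e 2) ∈ Submodule.span ℝ ({e 0, e 1} : Set L))
    (hder : ∀ x ∈ Submodule.span ℝ ({e 0, e 1, e 2} : Set L),
        ∀ y ∈ Submodule.span ℝ ({e 0, e 1, e 2} : Set L),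
        φ ⁅x, y⁆ = ⁅φ x, y⁆ + ⁅x, φ y⁆) :
    φ (e 0) = 0 ∧ φ (e 1) = 0 ∧ φ (e 2) = 0 := by
  obtain ⟨a, ha⟩ := Submodule.mem_span_singleton.mp hφ1
  obtain ⟨b, hb⟩ := Submodule.mem_span_singleton.mp hφ2
  obtain ⟨c, d, hcd⟩ := Submodule.mem_span_pair.mp hφ3
  have m0 : e 0 ∈ Submodule.span ℝ ({e 0, e 1, e 2} : Set L) :=
    Submodule.subset_span (by simp)
  have m1 : e 1 ∈ Submodule.span ℝ ({e 0, e 1, e 2} : Set L) :=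
    Submodule.subset_span (by simp)
  have m2 : e 2 ∈ Submodule.span ℝ ({e 0, e 1, e 2} : Set L) :=
    Submodule.subset_span (by simp)
  have key : ∀ (u v w x : ℝ), u • e 0 + v • e 1 + w • e 2 + x • e 3 = 0 →
      u = 0 ∧ v = 0 ∧ w = 0 ∧ x = 0 := by
    intro u v w x h
    have := Fintype.linearIndependent_iff.mp e.linearIndependent ![u, v, w, x]
    have h' : ∑ i, ![u, v, w, x] i • e i = 0 := by
      simpa [Fin.sum_univ_four] using h
    exact ⟨this h' 0, this h' 1, this h' 2, this h' 3⟩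
  -- equation from [e0,e1]=e2
  have eq1 : c • e 0 + d • e 1 = a • e 0 + (-b) • e 1 := by
    have := hder (e 0) m0 (e 1) m1
    rw [h12, ← hcd, ← ha, ← hb] at this
    rw [this]
    have lie31 : ⁅e 3, e 1⁆ = e 0 := h42
    have lie30 : ⁅e 3, e 0⁆ = e 1 := h41
    simp [smul_lie, lie_smul, lie31, ← lie_skew (e 0) (e 3), lie30]
  -- equation from [e0,e2]=0
  have eq2 : d = 0 := by
    have := hder (e 0) m0 (e 2) m2
    rw [h13, ← hcd, ← ha, map_zero] at this
    have h0 : (0:L) = d • e 2 := by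
      rw [this]
      simp [smul_lie, lie_smul, h43, h12, ← lie_skew (e 0) (e 3), h41,
        ← lie_skew (e 1) (e 0), h23]
    have := key 0 0 d 0 (by rw [← h0]; simp)
    exact this.2.2.1
  have eq3 : c = 0 := by
    have := hder (e 1) m1 (e 2) m2
    rw [h23, ← hcd, ← hb, map_zero] at this
    have h0 : (0:L) = -(c • e 2) := by
      rw [this]
      simp [smul_lie, lie_smul, h43, ← lie_skew (e 1) (e 0), h12, h23]
    have := key 0 0 (-c) 0 (by rw [neg_smul, ← h0]; simp)
    have hc : -c = 0 := this.2.2.1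
    linarith
  have hab := key a (-b) 0 0 (by
    rw [← eq1, eq2, eq3]; simp)
  obtain ⟨ha0, hb0, -, -⟩ := hab
  have hb0' : b = 0 := by linarith [neg_eq_zero.mp hb0]
  refine ⟨?_, ?_, ?_⟩
  · rw [← ha, ha0, zero_smul]
  · rw [← hb, hb0', zero_smul]
  · rw [← hcd, eq2, eq3, zero_smul, zero_smul, add_zero]
end

section
/- Let h = [[a,b],[-b,-a]] with a,b real and b²-a² > 0. Then there exists a unique real t such that conjugation of h by T = [[cosh t, sinh t],[sinh t, cosh t]] yields a matrix of the form [[0,χ],[-χ,0]], namely t = (1/4)·ln((b-a)/(b+a)), and χ = sgn(a+b)·√(b²-a²). -/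
open Real Matrix

lemma Tinv (t : ℝ) : (!![Real.cosh t, Real.sinh t; Real.sinh t, Real.cosh t])⁻¹ =
    !![Real.cosh t, -Real.sinh t; -Real.sinh t, Real.cosh t] := by
  apply Matrix.inv_eq_left_inv
  have h := Real.cosh_sq_sub_sinh_sq t
  ext i j
  fin_cases i <;> fin_cases j <;>
    simp [Matrix.mul_apply, Fin.sum_univ_two] <;> nlinarith [h]

lemma conj_eq (a b t : ℝ) :
    (!![Real.cosh t, Real.sinh t; Real.sinh t, Real.cosh t])⁻¹ *
      !![a, b; -b, -a] *
      !![Real.cosh t, Real.sinh t; Real.sinh t, Real.cosh t] =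
    !![a*(Real.cosh t^2 + Real.sinh t^2) + 2*b*(Real.sinh t*Real.cosh t),
       a*(2*Real.sinh t*Real.cosh t) + b*(Real.cosh t^2 + Real.sinh t^2);
       -(a*(2*Real.sinh t*Real.cosh t) + b*(Real.cosh t^2 + Real.sinh t^2)),
       -(a*(Real.cosh t^2 + Real.sinh t^2) + 2*b*(Real.sinh t*Real.cosh t))] := by
  rw [Tinv]
  ext i j
  fin_cases i <;> fin_cases j <;>
    simp [Matrix.mul_apply, Fin.sum_univ_two] <;> ring

lemma fin2_eq {A B χ : ℝ} : (!![A, B; -B, -A] = !![0, χ; -χ, 0]) ↔ (A = 0 ∧ B = χ) := by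
  constructor
  · intro h
    have h00 := congrFun (congrFun h 0) 0
    have h01 := congrFun (congrFun h 0) 1
    simp at h00 h01
    exact ⟨h00, h01⟩
  · rintro ⟨h1, h2⟩
    subst h1; subst h2; norm_num

/-- If `det h = b² - a² > 0` for `h = [[a,b],[-b,-a]]`, there is a unique `t`
such that conjugation by `T = [[cosh t, sinh t],[sinh t, cosh t]]` brings `h` to the form
`[[0,χ],[-χ,0]]`; namely `t = (1/4)·log((b-a)/(b+a))` with `χ = sgn(a+b)·√(b²-a²)`. -/
theorem normal_form_det_pos (a b : ℝ) (h : a ^ 2 < b ^ 2) :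
    (∃! t : ℝ, ∃ χ : ℝ,
        (!![Real.cosh t, Real.sinh t; Real.sinh t, Real.cosh t])⁻¹ *
          !![a, b; -b, -a] *
          !![Real.cosh t, Real.sinh t; Real.sinh t, Real.cosh t] = !![0, χ; -χ, 0]) ∧
    (!![Real.cosh ((1/4) * Real.log ((b - a)/(b + a))),
        Real.sinh ((1/4) * Real.log ((b - a)/(b + a)));
        Real.sinh ((1/4) * Real.log ((b - a)/(b + a))),
        Real.cosh ((1/4) * Real.log ((b - a)/(b + a)))])⁻¹ *
      !![a, b; -b, -a] *
      !![Real.cosh ((1/4) * Real.log ((b - a)/(b + a))),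
         Real.sinh ((1/4) * Real.log ((b - a)/(b + a)));
         Real.sinh ((1/4) * Real.log ((b - a)/(b + a))),
         Real.cosh ((1/4) * Real.log ((b - a)/(b + a)))] =
      !![0, Real.sign (a + b) * Real.sqrt (b ^ 2 - a ^ 2);
         -(Real.sign (a + b) * Real.sqrt (b ^ 2 - a ^ 2)), 0] := by
  have hprod : 0 < (a + b) * (b - a) := by nlinarith
  have hab : a + b ≠ 0 := by
    intro h0; rw [h0] at hprod; simp at hprod
  have hba : b + a ≠ 0 := by intro hh; apply hab; linarith
  have hbma : b - a ≠ 0 := by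
    intro h0; rw [h0, mul_zero] at hprod; exact lt_irrefl 0 hprod
  have hq : 0 < (b - a) / (b + a) := by
    rcases mul_pos_iff.mp hprod with ⟨h1, h2⟩ | ⟨h1, h2⟩
    · exact div_pos h2 (by linarith)
    · exact div_pos_of_neg_of_neg h2 (by linarith)
  set t₀ := (1/4) * Real.log ((b - a)/(b + a)) with ht₀
  have hexp4 : Real.exp t₀ ^ 4 = (b - a) / (b + a) := by
    rw [show Real.exp t₀ ^ 4 = Real.exp (4 * t₀) by
      rw [show (4:ℝ) * t₀ = (4:ℕ) * t₀ by norm_num, Real.exp_nat_mul]]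
    rw [show 4 * t₀ = Real.log ((b - a)/(b + a)) by rw [ht₀]; ring]
    exact Real.exp_log hq
  -- scalar characterization
  have key : ∀ t : ℝ,
      (a*(Real.cosh t^2 + Real.sinh t^2) + 2*b*(Real.sinh t*Real.cosh t) = 0) ↔ t = t₀ := by
    intro t
    have he : (0:ℝ) < Real.exp t := Real.exp_pos t
    have hden : 2 * Real.exp t ^ 2 ≠ 0 := by positivity
    have hA : a*(Real.cosh t^2 + Real.sinh t^2) + 2*b*(Real.sinh t*Real.cosh t)
        = ((a + b) * Real.exp t ^ 4 + (a - b)) / (2 * Real.exp t ^ 2) := by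
      rw [Real.cosh_eq, Real.sinh_eq, Real.exp_neg]
      field_simp
      ring
    rw [hA, div_eq_zero_iff]
    constructor
    · rintro (h0 | h0)
      · have h4 : Real.exp t ^ 4 = (b - a) / (b + a) := by
          rw [eq_div_iff hba]
          linear_combination h0
        have h44 : Real.exp (4 * t) = Real.exp (4 * t₀) := by
          rw [show (4:ℝ) * t = (4:ℕ) * t by norm_num, Real.exp_nat_mul,
            show (4:ℝ) * t₀ = (4:ℕ) * t₀ by norm_num, Real.exp_nat_mul]
          rw [h4, hexp4]
        have := Real.exp_injective h44
        linarith
      · exact absurd h0 hden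
    · intro ht
      subst ht
      left
      rw [hexp4]
      field_simp
      ring
  -- value of χ at t₀
  have he : (0:ℝ) < Real.exp t₀ := Real.exp_pos t₀
  set s := Real.exp t₀ ^ 2 with hs
  have hspos : (0:ℝ) < s := by positivity
  have hs2 : s ^ 2 = (b - a) / (b + a) := by rw [hs, ← hexp4]; ring
  have h4' : (a + b) * Real.exp t₀ ^ 4 = b - a := by
    rw [hexp4]; field_simp; ring
  have hB' : a*(2*Real.sinh t₀*Real.cosh t₀) + b*(Real.cosh t₀^2 + Real.sinh t₀^2)
      = ((a + b) * Real.exp t₀ ^ 4 + (b - a)) / (2 * Real.exp t₀ ^ 2) := by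
    rw [Real.cosh_eq, Real.sinh_eq, Real.exp_neg]
    field_simp
    ring
  have hB : a*(2*Real.sinh t₀*Real.cosh t₀) + b*(Real.cosh t₀^2 + Real.sinh t₀^2)
      = (b - a) / s := by
    rw [hB', h4', hs]
    rw [div_eq_div_iff (by positivity) (by positivity)]
    ring
  have hχ : (b - a) / s = Real.sign (a + b) * Real.sqrt (b ^ 2 - a ^ 2) := by
    rcases mul_pos_iff.mp hprod with ⟨h1, h2⟩ | ⟨h1, h2⟩
    · rw [Real.sign_of_pos h1, one_mul]
      have hsq : b ^ 2 - a ^ 2 = ((b - a) / s) ^ 2 := by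
        rw [div_pow, hs2]
        field_simp
        ring
      rw [hsq, Real.sqrt_sq (div_nonneg (by linarith) hspos.le)]
    · rw [Real.sign_of_neg h1]
      have hsq : b ^ 2 - a ^ 2 = ((a - b) / s) ^ 2 := by
        rw [div_pow, hs2]
        field_simp
        ring
      rw [hsq, Real.sqrt_sq (div_nonneg (by linarith) hspos.le)]
      ring
  have main : (!![Real.cosh t₀, Real.sinh t₀; Real.sinh t₀, Real.cosh t₀])⁻¹ *
      !![a, b; -b, -a] *
      !![Real.cosh t₀, Real.sinh t₀; Real.sinh t₀, Real.cosh t₀] =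
      !![0, Real.sign (a + b) * Real.sqrt (b ^ 2 - a ^ 2);
         -(Real.sign (a + b) * Real.sqrt (b ^ 2 - a ^ 2)), 0] := by
    rw [conj_eq, fin2_eq]
    exact ⟨(key t₀).mpr rfl, by rw [hB, hχ]⟩
  refine ⟨⟨t₀, ⟨_, main⟩, ?_⟩, main⟩
  rintro t ⟨χ, ht⟩
  rw [conj_eq, fin2_eq] at ht
  exact (key t).mp ht.1
end

section
/- Consider a bracket on ℝ³ with basis X1,X2,X3 defined by [X1,X3]=X1+pX2, [X2,X3]=(p+ε)X1−X2, [X1,X2]=rX1+sX2+X3, where ε ∈ {2,−2}. The Jacobi identity holds if and only if r(1+p(p+ε)) = 0 and s = rp. -/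
/-- The Jacobiator of a bilinear bracket. -/
def Jac (B : (Fin 3 → ℝ) →ₗ[ℝ] (Fin 3 → ℝ) →ₗ[ℝ] (Fin 3 → ℝ)) (x y z : Fin 3 → ℝ) :
    Fin 3 → ℝ := B x (B y z) + B y (B z x) + B z (B x y)

lemma Jac_cyc (B : (Fin 3 → ℝ) →ₗ[ℝ] (Fin 3 → ℝ) →ₗ[ℝ] (Fin 3 → ℝ)) (x y z : Fin 3 → ℝ) :
    Jac B x y z = Jac B y z x := by unfold Jac; abel

lemma Jac_add1 (B : (Fin 3 → ℝ) →ₗ[ℝ] (Fin 3 → ℝ) →ₗ[ℝ] (Fin 3 → ℝ)) (x x' y z : Fin 3 → ℝ) :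
    Jac B (x + x') y z = Jac B x y z + Jac B x' y z := by
  simp only [Jac, map_add, LinearMap.add_apply]; abel

lemma Jac_smul1 (B : (Fin 3 → ℝ) →ₗ[ℝ] (Fin 3 → ℝ) →ₗ[ℝ] (Fin 3 → ℝ)) (c : ℝ)
    (x y z : Fin 3 → ℝ) : Jac B (c • x) y z = c • Jac B x y z := by
  simp only [Jac, map_smul, LinearMap.smul_apply, smul_add]

lemma Jac_add2 (B : (Fin 3 → ℝ) →ₗ[ℝ] (Fin 3 → ℝ) →ₗ[ℝ] (Fin 3 → ℝ)) (x y y' z : Fin 3 → ℝ) :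
    Jac B x (y + y') z = Jac B x y z + Jac B x y' z := by
  simp only [Jac, map_add, LinearMap.add_apply]; abel

lemma Jac_smul2 (B : (Fin 3 → ℝ) →ₗ[ℝ] (Fin 3 → ℝ) →ₗ[ℝ] (Fin 3 → ℝ)) (c : ℝ)
    (x y z : Fin 3 → ℝ) : Jac B x (c • y) z = c • Jac B x y z := by
  simp only [Jac, map_smul, LinearMap.smul_apply, smul_add]

lemma Jac_add3 (B : (Fin 3 → ℝ) →ₗ[ℝ] (Fin 3 → ℝ) →ₗ[ℝ] (Fin 3 → ℝ)) (x y z z' : Fin 3 → ℝ) :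
    Jac B x y (z + z') = Jac B x y z + Jac B x y z' := by
  simp only [Jac, map_add, LinearMap.add_apply]; abel

lemma Jac_smul3 (B : (Fin 3 → ℝ) →ₗ[ℝ] (Fin 3 → ℝ) →ₗ[ℝ] (Fin 3 → ℝ)) (c : ℝ)
    (x y z : Fin 3 → ℝ) : Jac B x y (c • z) = c • Jac B x y z := by
  simp only [Jac, map_smul, LinearMap.smul_apply, smul_add]

/-- For the bilinear antisymmetric bracket on ℝ³ with `[X1,X3]=X1+pX2`,
`[X2,X3]=(p+ε)X1−X2`, `[X1,X2]=rX1+sX2+X3` and `ε = ±2`, the Jacobi identity holds iff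
`r(1+p(p+ε)) = 0` and `s = rp`. -/
theorem jacobi_iff_case_det_h_zero (p r s ε : ℝ) (hε : ε = 2 ∨ ε = -2)
    (B : (Fin 3 → ℝ) →ₗ[ℝ] (Fin 3 → ℝ) →ₗ[ℝ] (Fin 3 → ℝ))
    (hskew : ∀ x y, B x y = -B y x)
    (h13 : B ![1, 0, 0] ![0, 0, 1] = ![1, 0, 0] + p • ![0, 1, 0])
    (h23 : B ![0, 1, 0] ![0, 0, 1] = (p + ε) • ![1, 0, 0] - ![0, 1, 0])
    (h12 : B ![1, 0, 0] ![0, 1, 0] = r • ![1, 0, 0] + s • ![0, 1, 0] + ![0, 0, 1]) :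
    (∀ x y z, B x (B y z) + B y (B z x) + B z (B x y) = 0) ↔
      (r * (1 + p * (p + ε)) = 0 ∧ s = r * p) := by
  have hxx : ∀ x, B x x = 0 := by
    intro x; funext i
    have h := congrFun (hskew x x) i
    simp only [Pi.neg_apply, Pi.zero_apply] at h ⊢
    linarith
  have b10 : B ![0, 1, 0] ![1, 0, 0] = -(r • ![1, 0, 0] + s • ![0, 1, 0] + ![0, 0, 1]) := by
    rw [hskew, h12]
  have b20 : B ![0, 0, 1] ![1, 0, 0] = -(![1, 0, 0] + p • ![0, 1, 0]) := by
    rw [hskew, h13]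
  have b21 : B ![0, 0, 1] ![0, 1, 0] = -((p + ε) • ![1, 0, 0] - ![0, 1, 0]) := by
    rw [hskew, h23]
  have hval : Jac B ![1, 0, 0] ![0, 1, 0] ![0, 0, 1]
      = (-(r + s * (p + ε))) • ![1, 0, 0] + (s - r * p) • ![0, 1, 0] := by
    unfold Jac
    rw [h23, b20, h12]
    simp only [map_smul, map_sub, map_add, map_neg, hxx, h12, b10, b20, b21]
    funext i
    fin_cases i <;>
      simp [Matrix.cons_val_zero, Matrix.cons_val_one] <;> ring
  constructor
  · intro hyp
    have hJ : Jac B ![1, 0, 0] ![0, 1, 0] ![0, 0, 1] = 0 := hyp _ _ _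
    rw [hval] at hJ
    have h0 := congrFun hJ 0
    have h1 := congrFun hJ 1
    simp at h0 h1
    constructor
    · linear_combination -h0 - (p + ε) * h1
    · linarith
  · rintro ⟨hr, hs⟩
    subst hs
    have h012 : Jac B ![1, 0, 0] ![0, 1, 0] ![0, 0, 1] = 0 := by
      rw [hval]
      funext i
      fin_cases i <;> simp <;> linear_combination -hr
    have hswap : ∀ x y z, Jac B y x z = - Jac B x y z := by
      intro x y z
      unfold Jac
      rw [hskew x z, hskew z y, hskew y x]
      simp only [map_neg]
      abel
    have hrep1 : ∀ x z, Jac B x x z = 0 := by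
      intro x z
      unfold Jac
      rw [hskew z x, hxx]
      simp only [map_neg, map_zero]
      abel
    have hrep2 : ∀ x y, Jac B x y y = 0 := by
      intro x y; rw [Jac_cyc]; exact hrep1 y x
    have hrep3 : ∀ x y, Jac B x y x = 0 := by
      intro x y; rw [Jac_cyc, Jac_cyc]; exact hrep1 x y
    have h120 : Jac B ![0, 1, 0] ![0, 0, 1] ![1, 0, 0] = 0 := by rw [Jac_cyc, Jac_cyc]; exact h012
    have h201 : Jac B ![0, 0, 1] ![1, 0, 0] ![0, 1, 0] = 0 := by rw [Jac_cyc]; exact h012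
    have h102 : Jac B ![0, 1, 0] ![1, 0, 0] ![0, 0, 1] = 0 := by rw [hswap, h012, neg_zero]
    have h210 : Jac B ![0, 0, 1] ![0, 1, 0] ![1, 0, 0] = 0 := by rw [hswap, h120, neg_zero]
    have h021 : Jac B ![1, 0, 0] ![0, 0, 1] ![0, 1, 0] = 0 := by rw [hswap, h201, neg_zero]
    intro x y z
    have hdec : ∀ v : Fin 3 → ℝ,
        v = v 0 • ![1, 0, 0] + v 1 • ![0, 1, 0] + v 2 • ![0, 0, 1] := by
      intro v; funext i; fin_cases i <;> simp
    show Jac B x y z = 0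
    rw [hdec x, hdec y, hdec z]
    simp only [Jac_add1, Jac_add2, Jac_add3, Jac_smul1, Jac_smul2, Jac_smul3,
      h012, h120, h201, h102, h210, h021, hrep1, hrep2, hrep3,
      smul_zero, add_zero, zero_add]
end

section
/- Let g be the 3-dimensional real Lie algebra with basis X1,X2,X3 and brackets [X1,X3]=X1+X2, [X2,X3]=−(X1+X2), [X1,X2]=τ(X1+X2)+X3. Then the derived algebra g' = [g,g] is spanned by {X1+X2, X3}, it is a 2-dimensional abelian ideal, and the matrix of ad_{X1} restricted to g' in this basis is [[τ,1],[1,0]], whose eigenvalues are (τ ± √(τ²+4))/2. -/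
open Polynomial

/-- For the Lie algebra with `[X1,X3]=X1+X2`, `[X2,X3]=−(X1+X2)`, `[X1,X2]=τ(X1+X2)+X3`:
the derived algebra is `span{X1+X2, X3}`, a 2-dimensional abelian ideal, and
`ad_{X1}` restricted to it has matrix `[[τ,1],[1,0]]` with eigenvalues `(τ ± √(τ²+4))/2`. -/
theorem case_det_h_zero_solution_one (L : Type*) [LieRing L] [LieAlgebra ℝ L]
    (b : Module.Basis (Fin 3) ℝ L) (τ : ℝ)
    (h13 : ⁅b 0, b 2⁆ = b 0 + b 1) (h23 : ⁅b 1, b 2⁆ = -(b 0 + b 1))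
    (h12 : ⁅b 0, b 1⁆ = τ • (b 0 + b 1) + b 2) :
    (LieSubmodule.toSubmodule ⁅(⊤ : LieIdeal ℝ L), (⊤ : LieIdeal ℝ L)⁆ =
        Submodule.span ℝ ({b 0 + b 1, b 2} : Set L)) ∧
    (∀ x ∈ Submodule.span ℝ ({b 0 + b 1, b 2} : Set L),
      ∀ y ∈ Submodule.span ℝ ({b 0 + b 1, b 2} : Set L), ⁅x, y⁆ = 0) ∧
    Module.finrank ℝ (Submodule.span ℝ ({b 0 + b 1, b 2} : Set L)) = 2 ∧
    ⁅b 0, b 0 + b 1⁆ = τ • (b 0 + b 1) + b 2 ∧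
    ⁅b 0, b 2⁆ = b 0 + b 1 ∧
    (!![τ, 1; 1, 0] : Matrix (Fin 2) (Fin 2) ℝ).charpoly =
      (X - C ((τ + Real.sqrt (τ ^ 2 + 4)) / 2)) *
        (X - C ((τ - Real.sqrt (τ ^ 2 + 4)) / 2)) := by
  set P := Submodule.span ℝ ({b 0 + b 1, b 2} : Set L) with hP
  have huP : b 0 + b 1 ∈ P := Submodule.subset_span (by simp)
  have hwP : b 2 ∈ P := Submodule.subset_span (by simp)
  -- brackets of basis vectors lie in P
  have hbb : ∀ i j : Fin 3, ⁅b i, b j⁆ ∈ P := by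
    have h01 : ⁅b 0, b 1⁆ ∈ P := by
      rw [h12]; exact P.add_mem (P.smul_mem τ huP) hwP
    have h02 : ⁅b 0, b 2⁆ ∈ P := by rw [h13]; exact huP
    have h12' : ⁅b 1, b 2⁆ ∈ P := by rw [h23]; exact P.neg_mem huP
    intro i j
    fin_cases i <;> fin_cases j
    · show ⁅b 0, b 0⁆ ∈ P; rw [lie_self]; exact P.zero_mem
    · exact h01
    · exact h02
    · show ⁅b 1, b 0⁆ ∈ P; rw [← lie_skew]; exact P.neg_mem h01
    · show ⁅b 1, b 1⁆ ∈ P; rw [lie_self]; exact P.zero_mem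
    · exact h12'
    · show ⁅b 2, b 0⁆ ∈ P; rw [← lie_skew]; exact P.neg_mem h02
    · show ⁅b 2, b 1⁆ ∈ P; rw [← lie_skew]; exact P.neg_mem h12'
    · show ⁅b 2, b 2⁆ ∈ P; rw [lie_self]; exact P.zero_mem
  -- all brackets lie in P
  have key : ∀ x y : L, ⁅x, y⁆ ∈ P := by
    intro x y
    have hx := Module.Basis.mem_span b x
    have hy := Module.Basis.mem_span b y
    refine Submodule.span_induction (p := fun x _ ↦ ⁅x, y⁆ ∈ P) ?_ ?_ ?_ ?_ hx
    · rintro _ ⟨i, rfl⟩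
      refine Submodule.span_induction (p := fun y _ ↦ ⁅b i, y⁆ ∈ P) ?_ ?_ ?_ ?_ hy
      · rintro _ ⟨j, rfl⟩; exact hbb i j
      · simp
      · intro a c _ _ ha hc; rw [lie_add]; exact P.add_mem ha hc
      · intro t a _ ha; rw [lie_smul]; exact P.smul_mem t ha
    · simp
    · intro a c _ _ ha hc; rw [add_lie]; exact P.add_mem ha hc
    · intro t a _ ha; rw [smul_lie]; exact P.smul_mem t ha
  refine ⟨?_, ?_, ?_, ?_, h13, ?_⟩
  · -- derived algebra = P
    apply le_antisymm
    · rw [LieSubmodule.lieIdeal_oper_eq_linear_span', Submodule.span_le]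
      rintro _ ⟨x, -, y, -, rfl⟩
      exact key x y
    · rw [hP, Submodule.span_le]
      have hmem : ∀ x y : L, ⁅x, y⁆ ∈ (LieSubmodule.toSubmodule
          ⁅(⊤ : LieIdeal ℝ L), (⊤ : LieIdeal ℝ L)⁆ : Submodule ℝ L) := by
        intro x y
        exact LieSubmodule.lie_mem_lie trivial trivial
      rintro z hz
      rcases hz with h | h
      · rw [h, ← h13]; exact hmem _ _
      · simp only [Set.mem_singleton_iff] at h
        have : b 2 = ⁅b 0, b 1⁆ - τ • ⁅b 0, b 2⁆ := by
          rw [h12, h13]; abel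
        rw [h, this]
        exact Submodule.sub_mem _ (hmem _ _) (Submodule.smul_mem _ _ (hmem _ _))
  · -- abelian
    have huw : ⁅b 0 + b 1, b 2⁆ = 0 := by
      rw [add_lie, h13, h23]; abel
    intro x hx y hy
    refine Submodule.span_induction (p := fun x _ ↦ ⁅x, y⁆ = 0) ?_ ?_ ?_ ?_ hx
    · intro z hz
      refine Submodule.span_induction (p := fun y _ ↦ ⁅z, y⁆ = 0) ?_ ?_ ?_ ?_ hy
      · intro w hw
        rcases hz with rfl | hz <;> rcases hw with rfl | hw
        · exact lie_self _
        · simp only [Set.mem_singleton_iff] at hw; rw [hw]; exact huw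
        · simp only [Set.mem_singleton_iff] at hz; rw [hz, ← lie_skew, huw, neg_zero]
        · simp only [Set.mem_singleton_iff] at hz hw; rw [hz, hw]; exact lie_self _
      · simp
      · intro a c _ _ ha hc; rw [lie_add, ha, hc, add_zero]
      · intro t a _ ha; rw [lie_smul, ha, smul_zero]
    · simp
    · intro a c _ _ ha hc; rw [add_lie, ha, hc, add_zero]
    · intro t a _ ha; rw [smul_lie, ha, smul_zero]
  · -- finrank = 2
    have hli : LinearIndependent ℝ ![b 0 + b 1, b 2] := by
      rw [LinearIndependent.pair_iff]
      intro s t hst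
      have h0 : s • b 0 + s • b 1 + t • b 2 = 0 := by
        rw [← hst, smul_add]
      have := Fintype.linearIndependent_iff.mp b.linearIndependent ![s, s, t] ?_
      · exact ⟨this 0, this 2⟩
      · rw [Fin.sum_univ_three]; simpa using h0
    have hset : ({b 0 + b 1, b 2} : Set L) = Set.range ![b 0 + b 1, b 2] := by
      rw [show Set.range ![b 0 + b 1, b 2] = {b 2, b 0 + b 1} by
        simp [Matrix.range_cons, Matrix.range_empty]]
      exact Set.pair_comm _ _
    rw [hP, hset, finrank_span_eq_card hli]
    simp
  · rw [← h12, lie_add, lie_self, zero_add]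
  · -- charpoly
    set s := Real.sqrt (τ ^ 2 + 4) with hs
    have hs2 : s ^ 2 = τ ^ 2 + 4 := Real.sq_sqrt (by positivity)
    have hch : (!![τ, 1; 1, 0] : Matrix (Fin 2) (Fin 2) ℝ).charpoly =
        X ^ 2 - C τ * X + C (-1) := by
      rw [Matrix.charpoly, Matrix.det_fin_two]
      simp [Matrix.charmatrix_apply]
      ring
    have expand : (X - C ((τ + s) / 2)) * (X - C ((τ - s) / 2)) =
        X ^ 2 - C (((τ + s) / 2) + ((τ - s) / 2)) * X + C (((τ + s) / 2) * ((τ - s) / 2)) := by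
      rw [C_add, C_mul]; ring
    have hsum : ((τ + s) / 2) + ((τ - s) / 2) = τ := by ring
    have hprod : ((τ + s) / 2) * ((τ - s) / 2) = -1 := by nlinarith [hs2]
    rw [hch, expand, hsum, hprod]
end

section
/- Let g be a real 3-dimensional Lie algebra with dim[g,g] = 1, spanned by Z, such that [g,[g,g]] ≠ 0. Then g is isomorphic to aff(ℝ)⊕ℝ, i.e. there is a basis E1,E2,E3 with [E1,E2]=E1, [E1,E3]=0, [E2,E3]=0. -/
/-- A real 3-dimensional Lie algebra with 1-dimensional derived algebra which is not
central is isomorphic to `aff(ℝ) ⊕ ℝ`: it admits a basis `E1,E2,E3` with `[E1,E2]=E1`,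
`[E1,E3]=0`, `[E2,E3]=0`. -/
theorem dim_derived_one_noncentral_iso_aff_plus_R
    (L : Type*) [LieRing L] [LieAlgebra ℝ L] [FiniteDimensional ℝ L]
    (h3 : Module.finrank ℝ L = 3)
    (h1 : Module.finrank ℝ
      (LieSubmodule.toSubmodule ⁅(⊤ : LieIdeal ℝ L), (⊤ : LieIdeal ℝ L)⁆) = 1)
    (hnc : ∃ x y z : L, ⁅x, ⁅y, z⁆⁆ ≠ 0) :
    ∃ E : Module.Basis (Fin 3) ℝ L, ⁅E 0, E 1⁆ = E 0 ∧ ⁅E 0, E 2⁆ = 0 ∧ ⁅E 1, E 2⁆ = 0 := by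
  classical
  set S : Submodule ℝ L :=
    LieSubmodule.toSubmodule ⁅(⊤ : LieIdeal ℝ L), (⊤ : LieIdeal ℝ L)⁆ with hS
  -- a generator Z of the derived algebra
  obtain ⟨v, hv0, hvspan⟩ := (finrank_eq_one_iff' (K := ℝ) (V := S)).mp h1
  set Z : L := (v : L) with hZdef
  have hZ0 : Z ≠ 0 := fun h => hv0 (Subtype.ext h)
  have hZS : Z ∈ S := v.2
  have hmul : ∀ w ∈ S, ∃ c : ℝ, w = c • Z := by
    intro w hw
    obtain ⟨c, hc⟩ := hvspan ⟨w, hw⟩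
    exact ⟨c, by simpa [hZdef] using congrArg Subtype.val hc.symm⟩
  have hlieS : ∀ x y : L, ⁅x, y⁆ ∈ S := fun x y =>
    LieSubmodule.lie_mem_lie (LieSubmodule.mem_top x) (LieSubmodule.mem_top y)
  -- non-centrality gives x with ⁅x, Z⁆ ≠ 0
  obtain ⟨x, y, z, hxyz⟩ := hnc
  obtain ⟨c0, hc0⟩ := hmul ⁅y, z⁆ (hlieS y z)
  have hxZ : ⁅x, Z⁆ ≠ 0 := by
    intro h
    apply hxyz
    rw [hc0, lie_smul, h, smul_zero]
  obtain ⟨lam, hlam⟩ := hmul ⁅x, Z⁆ (hlieS x Z)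
  have hlam0 : lam ≠ 0 := by
    intro h; apply hxZ; rw [hlam, h, zero_smul]
  set E2 : L := (-(1/lam)) • x with hE2def
  have hZx : ⁅Z, x⁆ = -(lam • Z) := by
    rw [← neg_neg ⁅Z, x⁆, lie_skew, hlam]
  have hb1 : ⁅Z, E2⁆ = Z := by
    rw [hE2def, lie_smul, hZx, smul_neg, smul_smul, neg_mul, neg_smul, neg_neg,
      one_div, inv_mul_cancel₀ hlam0, one_smul]
  -- a dual functional φ with φ Z = 1
  have hli : LinearIndepOn ℝ id ({Z} : Set L) :=
    LinearIndepOn.singleton hZ0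
  set B := Module.Basis.extend hli with hB
  have hZmem : Z ∈ hli.extend (Set.subset_univ ({Z} : Set L)) :=
    hli.subset_extend _ rfl
  set φ : L →ₗ[ℝ] ℝ := B.coord ⟨Z, hZmem⟩ with hφ
  have hφZ : φ Z = 1 := by
    have h2 : φ (B ⟨Z, hZmem⟩) = 1 := by
      simp [hφ, Module.Basis.coord_apply, Module.Basis.repr_self]
    rwa [Module.Basis.extend_apply_self] at h2
  set f : L →ₗ[ℝ] ℝ := φ ∘ₗ (LieAlgebra.ad ℝ L Z) with hf
  have key : ∀ w : L, ⁅Z, w⁆ = f w • Z := by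
    intro w
    obtain ⟨c, hc⟩ := hmul ⁅Z, w⁆ (hlieS Z w)
    have : f w = c := by
      simp [hf, LieAlgebra.ad_apply, hc, map_smul, hφZ]
    rw [this, hc]
  have hfE2 : f E2 = 1 := by
    have h := key E2
    rw [hb1] at h
    have h' : f E2 • Z = (1 : ℝ) • Z := by rw [← h, one_smul]
    exact smul_left_injective ℝ hZ0 h' 
  have hfZ : f Z = 0 := by
    have h := key Z
    rw [lie_self] at h
    by_contra hne
    exact hZ0 ((smul_eq_zero.mp h.symm).resolve_left hne)
  -- kernel of f has dimension 2
  have hsurj : Function.Surjective f := by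
    intro c
    exact ⟨c • E2, by simp [map_smul, hfE2]⟩
  have hrank : Module.finrank ℝ (LinearMap.range f) = 1 := by
    rw [LinearMap.range_eq_top.mpr hsurj]
    simp
  have hker2 : Module.finrank ℝ (LinearMap.ker f) = 2 := by
    have := LinearMap.finrank_range_add_finrank_ker f
    rw [hrank, h3] at this
    omega
  have hspanle : Submodule.span ℝ ({Z} : Set L) ≤ LinearMap.ker f := by
    rw [Submodule.span_le, Set.singleton_subset_iff]
    exact hfZ
  have hspanrank : Module.finrank ℝ (Submodule.span ℝ ({Z} : Set L)) = 1 :=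
    finrank_span_singleton hZ0
  have hlt : Submodule.span ℝ ({Z} : Set L) < LinearMap.ker f :=
    Submodule.lt_of_le_of_finrank_lt_finrank hspanle (by rw [hspanrank, hker2]; omega)
  obtain ⟨W, hWker, hWspan⟩ := SetLike.exists_of_lt hlt
  have hfW : f W = 0 := hWker
  obtain ⟨c, hc⟩ := hmul ⁅E2, W⁆ (hlieS E2 W)
  set E3 : L := W + c • Z with hE3def
  have hb2 : ⁅Z, E3⁆ = 0 := by
    rw [hE3def, lie_add, lie_smul, lie_self, smul_zero, add_zero, key W, hfW, zero_smul]
  have hEZ : ⁅E2, Z⁆ = -Z := by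
    rw [← neg_neg ⁅E2, Z⁆, lie_skew, hb1]
  have hb3 : ⁅E2, E3⁆ = 0 := by
    rw [hE3def, lie_add, lie_smul, hc, hEZ]
    simp
  have hfE3 : f E3 = 0 := by
    rw [hE3def, map_add, map_smul, hfW, hfZ, smul_zero, add_zero]
  -- linear independence
  set vv : Fin 3 → L := ![Z, E2, E3] with hvv
  have hli3 : LinearIndependent ℝ vv := by
    rw [Fintype.linearIndependent_iff]
    intro g hg
    rw [Fin.sum_univ_three] at hg
    simp only [hvv, Matrix.cons_val_zero, Matrix.cons_val_one, Matrix.head_cons,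
      Matrix.cons_val_two, Matrix.tail_cons] at hg
    have hg1 : g 1 = 0 := by
      have := congrArg f hg
      simp only [map_add, map_smul, hfZ, hfE2, hfE3, smul_zero, zero_add, add_zero,
        smul_eq_mul, mul_one, map_zero] at this
      linarith
    rw [hg1, zero_smul, add_zero] at hg
    have hg2 : g 2 = 0 := by
      by_contra hne
      apply hWspan
      rw [hE3def] at hg
      have h2 : g 2 • W = -(g 0 + g 2 * c) • Z := by
        linear_combination (norm := module) hg
      have hW : W = ((g 2)⁻¹ * -(g 0 + g 2 * c)) • Z := by
        have := congrArg (fun u => (g 2)⁻¹ • u) h2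
        simpa [smul_smul, inv_mul_cancel₀ hne] using this
      rw [hW]
      exact Submodule.smul_mem _ _ (Submodule.mem_span_singleton_self Z)
    rw [hg2, zero_smul, add_zero] at hg
    have hg0 : g 0 = 0 := by
      rcases smul_eq_zero.mp hg with h | h
      · exact h
      · exact absurd h hZ0
    intro i
    fin_cases i <;> assumption
  have hcard : Fintype.card (Fin 3) = Module.finrank ℝ L := by
    simp [h3]
  refine ⟨basisOfLinearIndependentOfCardEqFinrank hli3 hcard, ?_, ?_, ?_⟩ <;>
    simp only [coe_basisOfLinearIndependentOfCardEqFinrank, hvv,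
      Matrix.cons_val_zero, Matrix.cons_val_one, Matrix.head_cons,
      Matrix.cons_val_two, Matrix.tail_cons]
  · exact hb1
  · exact hb2
  · exact hb3
end
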